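/- arXiv:1905.04403 — 2 statements merged into one kernel-verified Lean document; each statement's English description precedes it below -/
import Mathlib

section
/- Let P be a finite set, let d : P → ℝ be a probability distribution on P (i.e. d(t) ≥ 0 for all t ∈ P and ∑_{t∈P} d(t) = 1), and let d̂ : P → ℝ be lower probability estimates satisfying 0 ≤ d̂(t) ≤ d(t) for all t ∈ P. Let v, U : P → ℝ be functions with v(t) ≤ U(t) ≤ 1 for all t ∈ P. Then ∑_{t∈P} d(t)·v(t) ≤ (∑_{t∈P} d̂(t)·U(t)) + (1 − ∑_{t∈P} d̂(t)). (This is the correctness of the modified Bellman upper-bound update Û of the algorithm, for a single state-action pair: the true expected value under d of the value function v is over-approximated by the update computed from the lower probability estimates d̂ and the over-approximation U, with the remaining probability mass 1 − ∑ d̂(t) conservatively assigned the maximal value 1.) -/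
/-- Correctness of the modified Bellman upper-bound update: given a probability
distribution `d` on a finite set, lower probability estimates `dhat` with
`0 ≤ dhat t ≤ d t`, and functions `v, U` with `v t ≤ U t ≤ 1`, the true expected
value of `v` under `d` is over-approximated by
`∑ dhat t * U t + (1 - ∑ dhat t)`. -/
theorem upper_update_correct {α : Type*} [Fintype α]
    (d dhat v U : α → ℝ)
    (hd_nonneg : ∀ t, 0 ≤ d t)
    (hd_sum : ∑ t, d t = 1)
    (hdhat_nonneg : ∀ t, 0 ≤ dhat t)
    (hdhat_le : ∀ t, dhat t ≤ d t)
    (hvU : ∀ t, v t ≤ U t)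
    (hU1 : ∀ t, U t ≤ 1) :
    ∑ t, d t * v t ≤ (∑ t, dhat t * U t) + (1 - ∑ t, dhat t) := by
  have h1 : ∑ t, d t * v t ≤ ∑ t, d t * U t :=
    Finset.sum_le_sum fun t _ => mul_le_mul_of_nonneg_left (hvU t) (hd_nonneg t)
  have h2 : ∑ t, d t * U t ≤ ∑ t, (dhat t * U t + (d t - dhat t)) := by
    refine Finset.sum_le_sum fun t _ => ?_
    nlinarith [hdhat_le t, hU1 t, hdhat_nonneg t, hvU t]
  have h3 : ∑ t, (dhat t * U t + (d t - dhat t))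
      = (∑ t, dhat t * U t) + (1 - ∑ t, dhat t) := by
    rw [Finset.sum_add_distrib, Finset.sum_sub_distrib, hd_sum]
  linarith
end

section
/- Let p ∈ [0,1], let n be a positive natural number, let c ≥ 0, and let X be a random variable distributed according to the binomial distribution with n trials and success probability p. Then the probability that X/n − p ≤ −c (equivalently, that the empirical success frequency underestimates p by at least c) is at most exp(−2·c²·n). -/
/-- Hoeffding's lemma for a Bernoulli variable, mgf form. -/
lemma bern_mgf (p : ℝ) (hp0 : 0 ≤ p) (hp1 : p ≤ 1) (s : ℝ) (hs : s ≤ 0) :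
    1 - p + p * Real.exp s ≤ Real.exp (s * p + s ^ 2 / 8) := by
  set D : ℝ → ℝ := fun x => 1 - p + p * Real.exp x with hDdef
  have hD : ∀ x, 0 < D x := by
    intro x
    rcases eq_or_lt_of_le hp0 with h | h
    · simp [hDdef, ← h]
    · have : 0 < p * Real.exp x := mul_pos h (Real.exp_pos x)
      have : 0 ≤ 1 - p := by linarith
      simp only [hDdef]
      nlinarith [Real.exp_pos x, mul_pos h (Real.exp_pos x)]
  have hD0 : D 0 = 1 := by simp [hDdef]
  -- g x = x*p + x^2/8 - log (D x), g' x = p + x/4 - p * exp x / D x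
  set g : ℝ → ℝ := fun x => x * p + x ^ 2 / 8 - Real.log (D x) with hgdef
  set g' : ℝ → ℝ := fun x => p + x / 4 - p * Real.exp x / D x with hg'def
  have hDeriv : ∀ x, HasDerivAt D (p * Real.exp x) x := by
    intro x
    exact ((Real.hasDerivAt_exp x).const_mul p).const_add (1 - p)
  have hgderiv : ∀ x, HasDerivAt g (g' x) x := by
    intro x
    have h1 : HasDerivAt (fun x : ℝ => x * p + x ^ 2 / 8) (p + x / 4) x := by
      have := ((hasDerivAt_id x).mul_const p).add
        (((hasDerivAt_pow 2 x)).div_const 8)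
      refine this.congr_deriv ?_
      norm_num
      ring
    have h2 : HasDerivAt (fun x => Real.log (D x)) (p * Real.exp x / D x) x :=
      (hDeriv x).log (hD x).ne'
    exact h1.sub h2
  have hg'deriv : ∀ x, HasDerivAt g'
      (1 / 4 - p * Real.exp x * (1 - p) / (D x) ^ 2) x := by
    intro x
    have h1 : HasDerivAt (fun x : ℝ => p + x / 4) (1 / 4) x := by
      simpa using ((hasDerivAt_id x).div_const 4).const_add p
    have h2 : HasDerivAt (fun x => p * Real.exp x / D x)
        ((p * Real.exp x * D x - p * Real.exp x * (p * Real.exp x)) / (D x) ^ 2) x :=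
      ((Real.hasDerivAt_exp x).const_mul p).div (hDeriv x) (hD x).ne'
    have h3 := h1.sub h2
    refine h3.congr_deriv ?_
    have : D x = 1 - p + p * Real.exp x := rfl
    rw [this]
    ring
  -- g' is monotone
  have hmono : Monotone g' := by
    apply monotone_of_deriv_nonneg
    · intro x; exact (hg'deriv x).differentiableAt
    · intro x
      rw [(hg'deriv x).deriv]
      have h4 : 4 * (p * Real.exp x * (1 - p)) ≤ (D x) ^ 2 := by
        simp only [hDdef]
        nlinarith [sq_nonneg ((1 - p) - p * Real.exp x)]
      have hD2 : (0:ℝ) < (D x) ^ 2 := pow_pos (hD x) 2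
      rw [sub_nonneg, div_le_iff₀ hD2]
      clear_value D g g'
      linarith
  have hg'0 : g' 0 = 0 := by simp [hg'def, hD0]
  have hg'nonpos : ∀ x ≤ 0, g' x ≤ 0 := fun x hx => hg'0 ▸ hmono hx
  -- g is antitone on Iic 0
  have hanti : AntitoneOn g (Set.Iic 0) := by
    apply antitoneOn_of_deriv_nonpos (convex_Iic 0)
    · exact Continuous.continuousOn
        (continuous_iff_continuousAt.2 fun x => (hgderiv x).differentiableAt.continuousAt)
    · intro x hx
      exact ((hgderiv x).differentiableAt).differentiableWithinAt
    · intro x hx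
      rw [(hgderiv x).deriv]
      exact hg'nonpos x (le_of_lt (by simpa using hx))
  have hg0 : g 0 = 0 := by simp [hgdef, hD0]
  have hgs : 0 ≤ g s := by
    have := hanti (Set.mem_Iic.2 hs) (Set.mem_Iic.2 le_rfl) hs
    rw [hg0] at this; exact this
  -- conclude
  have hlog : Real.log (D s) ≤ s * p + s ^ 2 / 8 := by
    simp only [hgdef] at hgs; linarith
  calc D s = Real.exp (Real.log (D s)) := (Real.exp_log (hD s)).symm
    _ ≤ Real.exp (s * p + s ^ 2 / 8) := Real.exp_le_exp.2 hlog

/-- One-sided Hoeffding bound for the binomial distribution: if `X` is binomial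
with `n` trials and success probability `p ∈ [0,1]`, then the probability that
the empirical frequency `X/n` underestimates `p` by at least `c` (i.e.
`X/n - p ≤ -c`) is at most `exp (-2 c² n)`. The probability of the event is
expressed as the sum of binomial probabilities `C(n,k) p^k (1-p)^(n-k)` over
the outcomes `k` in the event. -/
theorem hoeffding_one_sided (p : ℝ) (hp0 : 0 ≤ p) (hp1 : p ≤ 1)
    (n : ℕ) (hn : 0 < n) (c : ℝ) (hc : 0 ≤ c) :
    ∑ k ∈ (Finset.range (n + 1)).filter (fun k : ℕ => (k : ℝ) / n - p ≤ -c),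
        (n.choose k : ℝ) * p ^ k * (1 - p) ^ (n - k)
      ≤ Real.exp (-2 * c ^ 2 * n) := by
  have hq : 0 ≤ 1 - p := by linarith
  set t : ℝ := 4 * c with ht
  have htnn : 0 ≤ t := by positivity
  have hnpos : (0:ℝ) < n := Nat.cast_pos.2 hn
  set E : ℝ := Real.exp (-t) with hE
  have hEpos : 0 < E := Real.exp_pos _
  -- each term in the event is bounded by its exponentially tilted version
  have step1 : ∑ k ∈ (Finset.range (n + 1)).filter
        (fun k : ℕ => (k : ℝ) / n - p ≤ -c),
        (n.choose k : ℝ) * p ^ k * (1 - p) ^ (n - k)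
      ≤ ∑ k ∈ Finset.range (n + 1),
        Real.exp (t * ((p - c) * n - k)) *
          ((n.choose k : ℝ) * p ^ k * (1 - p) ^ (n - k)) := by
    refine le_trans (Finset.sum_le_sum ?_)
      (Finset.sum_le_sum_of_subset_of_nonneg (Finset.filter_subset _ _) ?_)
    · intro k hk
      rw [Finset.mem_filter] at hk
      have hkle : (k : ℝ) ≤ (p - c) * n := by
        have := hk.2
        rw [div_sub' hnpos.ne', div_le_iff₀ hnpos] at this
        nlinarith
      have harg : 0 ≤ t * ((p - c) * n - k) := by
        apply mul_nonneg htnn; linarith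
      have hterm : 0 ≤ (n.choose k : ℝ) * p ^ k * (1 - p) ^ (n - k) := by
        positivity
      exact le_mul_of_one_le_left hterm (Real.one_le_exp harg)
    · intro k _ _
      positivity
  -- identify the full tilted sum with the binomial mgf
  have step2 : ∑ k ∈ Finset.range (n + 1),
        Real.exp (t * ((p - c) * n - k)) *
          ((n.choose k : ℝ) * p ^ k * (1 - p) ^ (n - k))
      = Real.exp (t * ((p - c) * n)) * (p * E + (1 - p)) ^ n := by
    rw [add_pow, Finset.mul_sum]
    refine Finset.sum_congr rfl fun k _ => ?_
    have h1 : Real.exp (t * ((p - c) * n - k))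
        = Real.exp (t * ((p - c) * n)) * E ^ k := by
      rw [hE, ← Real.exp_nat_mul, ← Real.exp_add]
      ring_nf
    rw [h1, mul_pow]
    ring
  -- Hoeffding's lemma bound on the mgf
  have step3 : (p * E + (1 - p)) ^ n ≤ Real.exp ((-t) * p + (-t) ^ 2 / 8) ^ n := by
    apply pow_le_pow_left₀ (by positivity)
    have := bern_mgf p hp0 hp1 (-t) (by linarith)
    rw [hE]; linarith
  calc ∑ k ∈ (Finset.range (n + 1)).filter
        (fun k : ℕ => (k : ℝ) / n - p ≤ -c),
        (n.choose k : ℝ) * p ^ k * (1 - p) ^ (n - k)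
      ≤ Real.exp (t * ((p - c) * n)) * (p * E + (1 - p)) ^ n := by
        rw [← step2]; exact step1
    _ ≤ Real.exp (t * ((p - c) * n)) * Real.exp ((-t) * p + (-t) ^ 2 / 8) ^ n :=
        mul_le_mul_of_nonneg_left step3 (Real.exp_nonneg _)
    _ = Real.exp (-2 * c ^ 2 * n) := by
        rw [← Real.exp_nat_mul, ← Real.exp_add]
        congr 1
        rw [ht]; ring
end
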